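/- With the greedy algorithm on the partition matroid M_{m,M} with M ≥ m², the intersection-competitive ratio satisfies |OPT| / E[|ALG ∩ OPT|] = (m + M)/(m + M/m) ≥ m/2. -/

import Mathlib

open Finset

/-- The part of element `i`: `m` singleton parts followed by `M` blocks of size `m`. -/
def part (m : ℕ) {n : ℕ} (i : Fin n) : ℕ :=
  if (i : ℕ) < m then (i : ℕ) else m + ((i : ℕ) - m) / m

/-- Independence in the partition matroid: at most one element per part. -/
def pIndep (m : ℕ) {n : ℕ} (S : Finset (Fin n)) : Prop :=
  ∀ i ∈ S, ∀ j ∈ S, part m i = part m j → i = j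

instance (m n : ℕ) (S : Finset (Fin n)) : Decidable (pIndep m S) :=
  inferInstanceAs (Decidable (∀ i ∈ S, ∀ j ∈ S, part m i = part m j → i = j))

/-- The greedy online algorithm on arrival order `σ`. -/
def greedyALG (m : ℕ) {n : ℕ} (σ : Equiv.Perm (Fin n)) : Finset (Fin n) :=
  (List.ofFn fun t => σ t).foldl
    (fun S r => if pIndep m (insert r S) then insert r S else S) ∅

/-! ### Auxiliary development -/

theorem aux_div_eq_iff (a b c : ℕ) (h : 0 < b) :
    a / b = c ↔ c * b ≤ a ∧ a < (c + 1) * b := by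
  constructor
  · rintro rfl
    refine ⟨Nat.div_mul_le_self a b, ?_⟩
    rw [Nat.succ_mul]
    exact Nat.lt_div_mul_add h
  · rintro ⟨h1, h2⟩
    exact Nat.div_eq_of_lt_le h1 h2

/-- `x` arrives (weakly) before every other element of its part. -/
def isFirst (m : ℕ) {n : ℕ} (σ : Equiv.Perm (Fin n)) (x : Fin n) : Prop :=
  ∀ y, part m y = part m x → σ.symm x ≤ σ.symm y

instance (m n : ℕ) (σ : Equiv.Perm (Fin n)) (x : Fin n) : Decidable (isFirst m σ x) :=
  inferInstanceAs (Decidable (∀ y, _))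

lemma isFirst_unique {m n : ℕ} {σ : Equiv.Perm (Fin n)} {x y : Fin n}
    (hx : isFirst m σ x) (hy : isFirst m σ y) (h : part m x = part m y) : x = y := by
  have h1 := hx y h.symm
  have h2 := hy x h
  exact σ.symm.injective (le_antisymm h1 h2)

lemma exists_first (m : ℕ) {n : ℕ} (σ : Equiv.Perm (Fin n)) (x : Fin n) :
    ∃! y, part m y = part m x ∧ isFirst m σ y := by
  obtain ⟨y, hy, hmin⟩ := (univ.filter fun y : Fin n => part m y = part m x).exists_min_image
    (fun y => σ.symm y) ⟨x, by simp⟩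
  simp only [mem_filter, mem_univ, true_and] at hy hmin
  refine ⟨y, ⟨hy, fun z hz => hmin z (hz.trans hy)⟩, ?_⟩
  rintro z ⟨hz, hzf⟩
  exact isFirst_unique hzf (fun w hw => hmin w (hw.trans hy)) (hz.trans hy.symm)

lemma greedy_prefix (m : ℕ) {n : ℕ} (σ : Equiv.Perm (Fin n)) (k : ℕ) (hk : k ≤ n) :
    ((List.ofFn fun t => σ t).take k).foldl
      (fun S r => if pIndep m (insert r S) then insert r S else S) ∅ =
    univ.filter (fun x => (σ.symm x : ℕ) < k ∧ isFirst m σ x) := by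
  induction k with
  | zero => simp
  | succ k ih =>
    have hk' : k < n := hk
    rw [List.take_succ]
    have : (List.ofFn fun t => σ t)[k]? = some (σ ⟨k, by simpa using hk'⟩) := by
      simp [List.getElem?_ofFn, hk']
    rw [this]
    simp only [List.foldl_append, ih (le_of_lt hk'), Option.toList_some, List.foldl_cons,
      List.foldl_nil]
    set a := σ ⟨k, by simpa using hk'⟩ with ha
    have hsa : (σ.symm a : ℕ) = k := by simp [ha]
    by_cases hfa : isFirst m σ a
    · rw [if_pos]
      · ext x
        simp only [mem_insert, mem_filter, mem_univ, true_and]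
        constructor
        · rintro (rfl | ⟨h1, h2⟩)
          · exact ⟨by omega, hfa⟩
          · exact ⟨by omega, h2⟩
        · rintro ⟨h1, h2⟩
          rcases eq_or_ne x a with rfl | hne
          · exact Or.inl rfl
          · refine Or.inr ⟨?_, h2⟩
            rcases lt_or_eq_of_le (Nat.lt_succ_iff.mp h1) with h | h
            · exact h
            · exact absurd (σ.symm.injective (Fin.ext (h.trans hsa.symm))) hne
      · intro i hi j hj hij
        simp only [mem_insert, mem_filter, mem_univ, true_and] at hi hj
        rcases hi with rfl | ⟨hi1, hi2⟩ <;> rcases hj with rfl | ⟨hj1, hj2⟩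
        · rfl
        · exact isFirst_unique hfa hj2 hij
        · exact isFirst_unique hi2 hfa hij
        · exact isFirst_unique hi2 hj2 hij
    · rw [if_neg]
      · ext x
        simp only [mem_filter, mem_univ, true_and]
        constructor
        · rintro ⟨h1, h2⟩; exact ⟨Nat.lt_succ_of_lt h1, h2⟩
        · rintro ⟨h1, h2⟩
          refine ⟨?_, h2⟩
          rcases lt_or_eq_of_le (Nat.lt_succ_iff.mp h1) with h | h
          · exact h
          · exact absurd (σ.symm.injective (Fin.ext (h.trans hsa.symm)) ▸ h2) hfa
      · intro hInd
        obtain ⟨w, ⟨hw1, hw2⟩, _⟩ := exists_first m σ a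
        have hwa : w ≠ a := fun h => hfa (h ▸ hw2)
        have : ∃ y, part m y = part m a ∧ (σ.symm y : ℕ) < k := by
          simp only [isFirst, not_forall] at hfa
          obtain ⟨y, hy1, hy2⟩ := hfa
          exact ⟨y, hy1, by omega⟩
        obtain ⟨y, hy1, hy2⟩ := this
        have hwk : (σ.symm w : ℕ) < k := lt_of_le_of_lt (hw2 y (hy1.trans hw1.symm)) hy2
        have hwmem : w ∈ insert a (univ.filter (fun x => (σ.symm x : ℕ) < k ∧ isFirst m σ x)) := by
          simp [hwk, hw2]
        have hamem : a ∈ insert a (univ.filter (fun x => (σ.symm x : ℕ) < k ∧ isFirst m σ x)) :=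
          mem_insert_self _ _
        exact hwa (hInd w hwmem a hamem hw1)

lemma greedy_eq (m : ℕ) {n : ℕ} (σ : Equiv.Perm (Fin n)) :
    greedyALG m σ = univ.filter (fun x => isFirst m σ x) := by
  have := greedy_prefix m σ n le_rfl
  rw [List.take_of_length_le (by simp)] at this
  rw [greedyALG, this]
  apply filter_congr
  intro x _
  simp only [Fin.is_lt, true_and]

section
variable {m M n : ℕ} (hm : 1 ≤ m) (hn : n = (M + 1) * m)
include hm

omit hm in
lemma part_small {p : ℕ} (hp : p < m) (i : Fin n) : part m i = p ↔ (i : ℕ) = p := by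
  unfold part
  split_ifs with h
  · exact Iff.rfl
  · generalize ((i : ℕ) - m) / m = q
    omega

lemma part_big {p : ℕ} (hp : m ≤ p) (i : Fin n) :
    part m i = p ↔ m + (p - m) * m ≤ (i : ℕ) ∧ (i : ℕ) < m + (p - m) * m + m := by
  have he2 : (p - m + 1) * m = (p - m) * m + m := by ring
  unfold part
  split_ifs with h
  · constructor
    · intro he; omega
    · intro he; omega
  · constructor
    · intro he
      have hq : ((i : ℕ) - m) / m = p - m := by
        generalize ((i : ℕ) - m) / m = q at he ⊢; omega
      have := (aux_div_eq_iff _ m _ hm).mp hq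
      omega
    · intro he
      have hq : ((i : ℕ) - m) / m = p - m := (aux_div_eq_iff _ m _ hm).mpr (by omega)
      generalize ((i : ℕ) - m) / m = q at hq ⊢
      omega

include hn

omit hm in
lemma part_lt (i : Fin n) : part m i < m + M := by
  have hnm : n = M * m + m := by rw [hn]; ring
  have hi := i.isLt
  unfold part
  split_ifs with h
  · omega
  · have h1 : (i : ℕ) - m < M * m := by omega
    have h2 : ((i : ℕ) - m) / m < M := Nat.div_lt_of_lt_mul (by rw [mul_comm]; exact h1)
    omega

lemma part_surj {p : ℕ} (hp : p < m + M) : ∃ i : Fin n, part m i = p := by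
  have hnm : n = M * m + m := by rw [hn]; ring
  rcases lt_or_ge p m with h | h
  · exact ⟨⟨p, by omega⟩, (part_small h _).mpr rfl⟩
  · have hb : (p - m) + 1 ≤ M := by omega
    have hb2 : ((p - m) + 1) * m ≤ M * m := Nat.mul_le_mul_right m hb
    have he2 : (p - m + 1) * m = (p - m) * m + m := by ring
    refine ⟨⟨m + (p - m) * m, by omega⟩, (part_big hm h _).mpr ?_⟩
    constructor
    · exact le_refl _
    · show m + (p - m) * m < m + (p - m) * m + m
      omega

omit hn in
lemma fiber_card_small {x : Fin n} (hx : part m x < m) :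
    (univ.filter fun y : Fin n => part m y = part m x).card = 1 := by
  rw [card_eq_one]
  refine ⟨x, ?_⟩
  ext y
  simp only [mem_filter, mem_univ, true_and, mem_singleton]
  rw [part_small hx]
  have hxx : (x : ℕ) = part m x := (part_small hx x).mp rfl
  constructor
  · intro h; exact Fin.ext (by omega)
  · rintro rfl; omega

lemma fiber_card_big {x : Fin n} (hx : m ≤ part m x) :
    (univ.filter fun y : Fin n => part m y = part m x).card = m := by
  have hnm : n = M * m + m := by rw [hn]; ring
  set p := part m x with hp
  have hpM : p < m + M := part_lt hn x
  have hb : (p - m) + 1 ≤ M := by omega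
  have hb2 : ((p - m) + 1) * m ≤ M * m := Nat.mul_le_mul_right m hb
  have he2 : (p - m + 1) * m = (p - m) * m + m := by ring
  have hLm : m + (p - m) * m + m ≤ n := by omega
  have key : (univ.filter fun y : Fin n => part m y = part m x).card = (range m).card := by
    refine card_bij' (fun y _ => (y : ℕ) - (m + (p - m) * m))
      (fun j hj => (⟨m + (p - m) * m + j, by simp only [mem_range] at hj; omega⟩ : Fin n))
      ?_ ?_ ?_ ?_
    · intro y hy
      simp only [mem_filter, mem_univ, true_and] at hy
      rw [part_big hm hx] at hy
      simp only [mem_range]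
      omega
    · intro j hj
      simp only [mem_range] at hj
      simp only [mem_filter, mem_univ, true_and]
      rw [part_big hm hx]
      constructor
      · show m + (p - m) * m ≤ m + (p - m) * m + j; omega
      · show m + (p - m) * m + j < m + (p - m) * m + m; omega
    · intro y hy
      simp only [mem_filter, mem_univ, true_and] at hy
      rw [part_big hm hx] at hy
      apply Fin.ext
      show m + (p - m) * m + ((y : ℕ) - (m + (p - m) * m)) = (y : ℕ)
      omega
    · intro j hj
      simp only [mem_range] at hj
      show m + (p - m) * m + j - (m + (p - m) * m) = j
      omega
  rw [key, card_range]

lemma card_firsts (σ : Equiv.Perm (Fin n)) :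
    (univ.filter fun x => isFirst m σ x).card = m + M := by
  rw [show m + M = (range (m + M)).card by rw [card_range]]
  refine card_bij (fun x _ => part m x) ?_ ?_ ?_
  · intro x _
    simp only [mem_range]
    exact part_lt hn x
  · intro x hx y hy h
    simp only [mem_filter, mem_univ, true_and] at hx hy
    exact isFirst_unique hx hy h
  · intro p hp
    simp only [mem_range] at hp
    obtain ⟨i, hi⟩ := part_surj hm hn hp
    obtain ⟨y, ⟨hy1, hy2⟩, _⟩ := exists_first m σ i
    exact ⟨y, by simp [hy2], hy1.trans hi⟩

lemma card_firsts_small (σ : Equiv.Perm (Fin n)) :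
    ((univ.filter fun x => isFirst m σ x).filter fun x => part m x < m).card = m := by
  have key : ((univ.filter fun x => isFirst m σ x).filter fun x => part m x < m).card
      = (range m).card := by
    refine card_bij (fun x _ => part m x) ?_ ?_ ?_
    · intro x hx
      simp only [mem_filter, mem_univ, true_and] at hx
      simp only [mem_range]
      exact hx.2
    · intro x hx y hy h
      simp only [mem_filter, mem_univ, true_and] at hx hy
      exact isFirst_unique hx.1 hy.1 h
    · intro p hp
      simp only [mem_range] at hp
      obtain ⟨i, hi⟩ := part_surj hm hn (show p < m + M by omega)
      obtain ⟨y, ⟨hy1, hy2⟩, _⟩ := exists_first m σ i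
      have hyp : part m y = p := hy1.trans hi
      exact ⟨y, by simp [hy2, hyp, hp], hyp⟩
  rw [key, card_range]

end

lemma isFirst_swap {m n : ℕ} {x y : Fin n} (h : part m y = part m x)
    (σ : Equiv.Perm (Fin n)) (hf : isFirst m σ x) :
    isFirst m (Equiv.swap x y * σ) y := by
  intro z hz
  have hsymm : ∀ w, (Equiv.swap x y * σ).symm w = σ.symm (Equiv.swap x y w) := by
    intro w
    simp [Equiv.Perm.mul_def, Equiv.symm_trans_apply]
  rw [hsymm, hsymm, Equiv.swap_apply_right]
  have hpz : part m (Equiv.swap x y z) = part m x := by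
    rcases eq_or_ne z x with rfl | hzx
    · rw [Equiv.swap_apply_left]; exact h
    · rcases eq_or_ne z y with rfl | hzy
      · rw [Equiv.swap_apply_right]
      · rw [Equiv.swap_apply_of_ne_of_ne hzx hzy]; exact hz.trans h
  exact hf _ hpz

lemma count_first_eq {m n : ℕ} {x y : Fin n} (h : part m y = part m x) :
    (univ.filter fun σ : Equiv.Perm (Fin n) => isFirst m σ x).card =
    (univ.filter fun σ : Equiv.Perm (Fin n) => isFirst m σ y).card := by
  refine card_nbij' (fun σ => Equiv.swap x y * σ) (fun σ => Equiv.swap x y * σ) ?_ ?_ ?_ ?_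
  · intro σ hσ
    simp only [mem_coe, mem_filter, mem_univ, true_and] at hσ ⊢
    exact isFirst_swap h σ hσ
  · intro σ hσ
    simp only [mem_coe, mem_filter, mem_univ, true_and] at hσ ⊢
    have := isFirst_swap (x := y) (y := x) h.symm σ hσ
    rwa [Equiv.swap_comm] at this
  · intro σ _
    simp [← mul_assoc]
  · intro σ _
    simp [← mul_assoc]

noncomputable def firstOf (m : ℕ) {n : ℕ} (σ : Equiv.Perm (Fin n)) (x : Fin n) : Fin n :=
  Finset.choose (fun y => part m y = part m x ∧ isFirst m σ y) univ
    (by simpa using exists_first m σ x)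

lemma firstOf_spec (m : ℕ) {n : ℕ} (σ : Equiv.Perm (Fin n)) (x : Fin n) :
    part m (firstOf m σ x) = part m x ∧ isFirst m σ (firstOf m σ x) :=
  Finset.choose_property (fun y => part m y = part m x ∧ isFirst m σ y) univ _

lemma firstOf_eq_iff (m : ℕ) {n : ℕ} (σ : Equiv.Perm (Fin n)) {x y : Fin n}
    (hy : part m y = part m x) : firstOf m σ x = y ↔ isFirst m σ y := by
  obtain ⟨h1, h2⟩ := firstOf_spec m σ x
  constructor
  · rintro rfl; exact h2
  · intro hf; exact isFirst_unique h2 hf (h1.trans hy.symm)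

lemma count_first_mul {m n : ℕ} (x : Fin n) :
    (univ.filter fun σ : Equiv.Perm (Fin n) => isFirst m σ x).card *
      (univ.filter fun y : Fin n => part m y = part m x).card =
    Fintype.card (Equiv.Perm (Fin n)) := by
  classical
  have key : Fintype.card (Equiv.Perm (Fin n)) =
      ∑ y ∈ univ.filter (fun y : Fin n => part m y = part m x),
        ((univ : Finset (Equiv.Perm (Fin n))).filter fun σ => firstOf m σ x = y).card := by
    rw [← Finset.card_univ]
    exact card_eq_sum_card_fiberwise (fun σ _ => by
      simp only [mem_coe, mem_filter, mem_univ, true_and]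
      exact (firstOf_spec m σ x).1)
  rw [key]
  have step : ∀ y ∈ univ.filter (fun y : Fin n => part m y = part m x),
      ((univ : Finset (Equiv.Perm (Fin n))).filter fun σ => firstOf m σ x = y).card =
      (univ.filter fun σ : Equiv.Perm (Fin n) => isFirst m σ x).card := by
    intro y hy
    simp only [mem_filter, mem_univ, true_and] at hy
    rw [show ((univ : Finset (Equiv.Perm (Fin n))).filter fun σ => firstOf m σ x = y) =
        (univ.filter fun σ : Equiv.Perm (Fin n) => isFirst m σ y) from ?_]
    · exact (count_first_eq hy).symm
    · apply filter_congr
      intro σ _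
      simp only [firstOf_eq_iff m σ hy]
  rw [Finset.sum_congr rfl step, Finset.sum_const, smul_eq_mul, mul_comm]

theorem greedy_partition_matroid_intersection (m M n : ℕ) (hm : 1 ≤ m)
    (hM : m ^ 2 ≤ M) (hn : n = (M + 1) * m) :
    (((greedyALG m (1 : Equiv.Perm (Fin n))).card : ℝ) = m + M) ∧
    (∑ σ : Equiv.Perm (Fin n),
        ((greedyALG m σ ∩ greedyALG m (1 : Equiv.Perm (Fin n))).card : ℝ) =
      (Fintype.card (Equiv.Perm (Fin n)) : ℝ) * ((m : ℝ) + (M : ℝ) / m)) ∧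
    ((m : ℝ) / 2 ≤ ((m : ℝ) + M) / ((m : ℝ) + (M : ℝ) / m)) := by
  classical
  have hm0 : (0 : ℝ) < m := by exact_mod_cast hm
  set G1 := univ.filter (fun x : Fin n => isFirst m (1 : Equiv.Perm (Fin n)) x) with hG1
  have hcard1 : G1.card = m + M := card_firsts hm hn _
  refine ⟨?_, ?_, ?_⟩
  · rw [greedy_eq, card_firsts hm hn]
    push_cast; ring
  · -- main expectation computation
    set K := Fintype.card (Equiv.Perm (Fin n)) with hK
    have hinter : ∀ σ : Equiv.Perm (Fin n),
        greedyALG m σ ∩ greedyALG m (1 : Equiv.Perm (Fin n)) =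
        G1.filter (fun x => isFirst m σ x) := by
      intro σ
      rw [greedy_eq, greedy_eq, hG1]
      ext x
      simp only [mem_inter, mem_filter, mem_univ, true_and]
      tauto
    have hnat : ∑ σ : Equiv.Perm (Fin n),
        (greedyALG m σ ∩ greedyALG m (1 : Equiv.Perm (Fin n))).card =
        ∑ x ∈ G1, (univ.filter fun σ : Equiv.Perm (Fin n) => isFirst m σ x).card := by
      calc ∑ σ : Equiv.Perm (Fin n),
            (greedyALG m σ ∩ greedyALG m (1 : Equiv.Perm (Fin n))).card
          = ∑ σ : Equiv.Perm (Fin n), ∑ x ∈ G1, if isFirst m σ x then 1 else 0 := by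
            refine Finset.sum_congr rfl fun σ _ => ?_
            rw [hinter σ, card_filter]
        _ = ∑ x ∈ G1, ∑ σ : Equiv.Perm (Fin n), if isFirst m σ x then 1 else 0 :=
            Finset.sum_comm
        _ = ∑ x ∈ G1, (univ.filter fun σ : Equiv.Perm (Fin n) => isFirst m σ x).card :=
            Finset.sum_congr rfl fun x _ => (card_filter _ _).symm
    have hcast : ∑ σ : Equiv.Perm (Fin n),
        ((greedyALG m σ ∩ greedyALG m (1 : Equiv.Perm (Fin n))).card : ℝ) =
        ∑ x ∈ G1, (((univ.filter fun σ : Equiv.Perm (Fin n) => isFirst m σ x).card : ℕ) : ℝ) := by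
      rw [← Nat.cast_sum, hnat, Nat.cast_sum]
    rw [hcast]
    have hNsmall : ∀ x ∈ G1.filter (fun x => part m x < m),
        (((univ.filter fun σ : Equiv.Perm (Fin n) => isFirst m σ x).card : ℕ) : ℝ) = K := by
      intro x hx
      simp only [mem_filter] at hx
      have hcm := count_first_mul (m := m) x
      rw [fiber_card_small hm hx.2, mul_one] at hcm
      exact_mod_cast hcm
    have hNbig : ∀ x ∈ G1.filter (fun x => ¬ part m x < m),
        (((univ.filter fun σ : Equiv.Perm (Fin n) => isFirst m σ x).card : ℕ) : ℝ)
          = (K : ℝ) / m := by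
      intro x hx
      simp only [mem_filter] at hx
      have hcm := count_first_mul (m := m) x
      rw [fiber_card_big hm hn (by omega)] at hcm
      rw [eq_div_iff (ne_of_gt hm0)]
      exact_mod_cast hcm
    have hsplit := Finset.sum_filter_add_sum_filter_not G1 (fun x => part m x < m)
      (fun x => (((univ.filter fun σ : Equiv.Perm (Fin n) => isFirst m σ x).card : ℕ) : ℝ))
    rw [← hsplit, Finset.sum_congr rfl hNsmall, Finset.sum_congr rfl hNbig,
      Finset.sum_const, Finset.sum_const]
    have hcs : (G1.filter (fun x => part m x < m)).card = m := card_firsts_small hm hn _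
    have hcb : (G1.filter (fun x => ¬ part m x < m)).card = M := by
      have := Finset.card_filter_add_card_filter_not (s := G1)
        (p := fun x => part m x < m)
      omega
    rw [hcs, hcb]
    push_cast
    field_simp
    have h : (m : ℝ) * ((K : ℝ) / m) = K := by field_simp
    simp only [nsmul_eq_mul]
    linear_combination (M : ℝ) * h
  · -- the ratio bound
    have hM' : (m : ℝ) ^ 2 ≤ M := by exact_mod_cast hM
    have hd : (0 : ℝ) < (m : ℝ) + (M : ℝ) / m := by
      have : (0 : ℝ) ≤ (M : ℝ) / m := div_nonneg (by positivity) (le_of_lt hm0)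
      linarith
    rw [div_le_div_iff₀ (by norm_num) hd]
    have hmm : (m : ℝ) * ((m : ℝ) + (M : ℝ) / m) = (m : ℝ) ^ 2 + M := by
      field_simp
    rw [hmm]
    nlinarith
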